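/- arXiv:0710.1936 — 11 statements merged into one kernel-verified Lean document; each statement's English description precedes it below -/
import Mathlib

section
/- Let n > 1 be an integer and a ≥ 1 an integer. Then a is regular (mod n) if and only if gcd(a, n) = gcd(a², n). -/
-- An integer `a` is regular (mod `n`) if there is an integer `x`
-- with `a ^ 2 * x ≡ a (mod n)`.
def IsRegularMod (n a : ℤ) : Prop := ∃ x : ℤ, a ^ 2 * x ≡ a [ZMOD n]

-- `rho n` is the number of integers `a` with `1 ≤ a ≤ n` that are regular (mod `n`).
open Classical in
noncomputable def rho (n : ℕ) : ℕ :=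
  ((Finset.Icc 1 n).filter fun a : ℕ => IsRegularMod (n : ℤ) (a : ℤ)).card

theorem regular_iff_gcd_eq_gcd_sq (n : ℕ) (hn : 1 < n) (a : ℕ) (ha : 1 ≤ a) :
    IsRegularMod (n : ℤ) (a : ℤ) ↔ Nat.gcd a n = Nat.gcd (a ^ 2) n := by
  constructor
  · rintro ⟨x, hx⟩
    have hdvd : (n : ℤ) ∣ (a : ℤ) - (a : ℤ) ^ 2 * x := Int.ModEq.dvd hx
    have hgd : (Nat.gcd (a ^ 2) n : ℤ) ∣ (a : ℤ) := by
      have h1 : (Nat.gcd (a ^ 2) n : ℤ) ∣ (a : ℤ) ^ 2 := by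
        exact_mod_cast Int.natCast_dvd_natCast.mpr (Nat.gcd_dvd_left _ _)
      have h2 : (Nat.gcd (a ^ 2) n : ℤ) ∣ (n : ℤ) :=
        Int.natCast_dvd_natCast.mpr (Nat.gcd_dvd_right _ _)
      have := dvd_add (h2.trans hdvd) (h1.mul_right x)
      simpa using this
    have hgd' : Nat.gcd (a ^ 2) n ∣ a := by exact_mod_cast hgd
    exact Nat.dvd_antisymm
      (Nat.dvd_gcd ((Nat.gcd_dvd_left a n).trans (dvd_pow_self a two_ne_zero))
        (Nat.gcd_dvd_right a n))
      (Nat.dvd_gcd hgd' (Nat.gcd_dvd_right _ _))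
  · intro h
    set A : ℤ := (a : ℤ) ^ 2 with hA
    have hgd : (Int.gcd A (n : ℤ) : ℤ) ∣ (a : ℤ) := by
      have : Int.gcd A (n : ℤ) = Nat.gcd (a ^ 2) n := by
        simp [hA, Int.gcd, Int.natAbs_pow]
      rw [this, ← h]
      exact_mod_cast Nat.gcd_dvd_left a n
    obtain ⟨k, hk⟩ := hgd
    refine ⟨Int.gcdA A (n : ℤ) * k, ?_⟩
    have hbez := Int.gcd_eq_gcd_ab A (n : ℤ)
    rw [Int.modEq_iff_dvd]
    refine ⟨Int.gcdB A (n : ℤ) * k, ?_⟩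
    calc (a : ℤ) - A * (Int.gcdA A (n : ℤ) * k)
        = (Int.gcd A (n : ℤ) - A * Int.gcdA A (n : ℤ)) * k := by rw [hk]; ring
      _ = (n : ℤ) * (Int.gcdB A (n : ℤ) * k) := by rw [hbez]; ring
end

section
/- Let n > 1 be an integer and a ≥ 1 an integer. Then a is regular (mod n) if and only if gcd(a, n) is a unitary divisor of n. -/
/-- `d` is a unitary divisor of `n` if `d ∣ n` and `gcd (d, n / d) = 1`. -/
def IsUnitaryDivisor (d n : ℕ) : Prop := d ∣ n ∧ Nat.gcd d (n / d) = 1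

theorem regular_iff_gcd_unitary (n : ℕ) (hn : 1 < n) (a : ℕ) (ha : 1 ≤ a) :
    IsRegularMod (n : ℤ) (a : ℤ) ↔ IsUnitaryDivisor (Nat.gcd a n) n := by
  set d := Nat.gcd a n with hd
  have hd0 : 0 < d := Nat.gcd_pos_of_pos_right a (by omega)
  have hdn : d ∣ n := Nat.gcd_dvd_right a n
  have hda : d ∣ a := Nat.gcd_dvd_left a n
  -- key gcd computation: gcd(a², n) = d * gcd(d, n/d)
  have key : Nat.gcd (a ^ 2) n = d * Nat.gcd d (n / d) := by
    obtain ⟨a', ha'⟩ := hda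
    obtain ⟨m, hm⟩ := hdn
    have hco : Nat.Coprime a' m := by
      have := Nat.coprime_div_gcd_div_gcd (m := a) (n := n) hd0
      rwa [← hd, ha', hm, Nat.mul_div_cancel_left _ hd0,
        Nat.mul_div_cancel_left _ hd0] at this
    have hnd : n / d = m := by rw [hm, Nat.mul_div_cancel_left _ hd0]
    rw [hnd, ha', hm]
    have h2 : (d * a') ^ 2 = d * (d * a' ^ 2) := by ring
    rw [h2, Nat.gcd_mul_left]
    congr 1
    exact Nat.Coprime.gcd_mul_right_cancel d (hco.pow_left 2)
  -- regularity ↔ gcd(a², n) ∣ a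
  have reg_iff : IsRegularMod (n : ℤ) (a : ℤ) ↔ Nat.gcd (a ^ 2) n ∣ a := by
    constructor
    · rintro ⟨x, hx⟩
      have hdvd : (n : ℤ) ∣ (a : ℤ) - (a : ℤ) ^ 2 * x := Int.ModEq.dvd hx
      obtain ⟨k, hk⟩ := hdvd
      have hg : ((Nat.gcd (a ^ 2) n : ℕ) : ℤ) ∣ (a : ℤ) := by
        have h1 : ((Nat.gcd (a ^ 2) n : ℕ) : ℤ) ∣ (a : ℤ) ^ 2 := by
          have := Nat.gcd_dvd_left (a ^ 2) n
          exact_mod_cast Int.natCast_dvd_natCast.mpr this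
        have h2 : ((Nat.gcd (a ^ 2) n : ℕ) : ℤ) ∣ (n : ℤ) :=
          Int.natCast_dvd_natCast.mpr (Nat.gcd_dvd_right (a ^ 2) n)
        have : (a : ℤ) = (a : ℤ) ^ 2 * x + n * k := by linarith [hk]
        rw [this]
        exact dvd_add (h1.mul_right x) (h2.mul_right k)
      exact_mod_cast hg
    · intro hg
      obtain ⟨c, hc⟩ := hg
      have bez : (Int.gcd ((a : ℤ) ^ 2) (n : ℤ) : ℤ) =
          (a : ℤ) ^ 2 * Int.gcdA ((a : ℤ) ^ 2) (n : ℤ) +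
          (n : ℤ) * Int.gcdB ((a : ℤ) ^ 2) (n : ℤ) := Int.gcd_eq_gcd_ab _ _
      have hgcd : Int.gcd ((a : ℤ) ^ 2) (n : ℤ) = Nat.gcd (a ^ 2) n := by
        rw [show ((a : ℤ) ^ 2) = ((a ^ 2 : ℕ) : ℤ) by push_cast; ring]
        exact Int.gcd_natCast_natCast _ _
      set u := Int.gcdA ((a : ℤ) ^ 2) (n : ℤ) with hu
      set v := Int.gcdB ((a : ℤ) ^ 2) (n : ℤ) with hv
      refine ⟨u * c, ?_⟩
      have haeq : (a : ℤ) = ((Nat.gcd (a ^ 2) n : ℕ) : ℤ) * c := by exact_mod_cast hc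
      have heq : (a : ℤ) - (a : ℤ) ^ 2 * (u * c) = (n : ℤ) * (v * c) := by
        have hb : ((Nat.gcd (a ^ 2) n : ℕ) : ℤ) = (a : ℤ) ^ 2 * u + (n : ℤ) * v := by
          rw [← hgcd]; exact bez
        calc (a : ℤ) - (a : ℤ) ^ 2 * (u * c)
            = ((Nat.gcd (a ^ 2) n : ℕ) : ℤ) * c - (a : ℤ) ^ 2 * (u * c) := by rw [← haeq]
          _ = ((a : ℤ) ^ 2 * u + (n : ℤ) * v) * c - (a : ℤ) ^ 2 * (u * c) := by rw [hb]
          _ = (n : ℤ) * (v * c) := by ring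
      exact Int.modEq_iff_dvd.mpr ⟨_, heq⟩
  rw [reg_iff]
  constructor
  · intro hg
    refine ⟨hdn, ?_⟩
    have h1 : Nat.gcd (a ^ 2) n ∣ d := Nat.dvd_gcd hg (Nat.gcd_dvd_right (a ^ 2) n)
    have h2 : d ∣ Nat.gcd (a ^ 2) n :=
      Nat.dvd_gcd ((Nat.gcd_dvd_left a n).trans (dvd_pow_self a (by norm_num))) hdn
    have heq : Nat.gcd (a ^ 2) n = d := Nat.dvd_antisymm h1 h2
    have : d * Nat.gcd d (n / d) = d * 1 := by rw [← key, heq, mul_one]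
    exact Nat.eq_of_mul_eq_mul_left hd0 this
  · rintro ⟨-, hu⟩
    rw [key, hu, mul_one]
    exact Nat.gcd_dvd_left a n
end

section
/- Let n > 1 be an integer and a ≥ 1 an integer. Then a is regular (mod n) if and only if a^{φ(n)+1} ≡ a (mod n), where φ is Euler's totient function. -/
theorem regular_iff_pow_totient_succ (n : ℕ) (hn : 1 < n) (a : ℕ) (ha : 1 ≤ a) :
    IsRegularMod (n : ℤ) (a : ℤ) ↔ a ^ (Nat.totient n + 1) ≡ a [MOD n] := by
  haveI : NeZero n := ⟨by omega⟩
  have hφ : 1 ≤ n.totient := Nat.totient_pos.2 (by omega)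
  rw [← ZMod.natCast_eq_natCast_iff]
  push_cast
  set b : ZMod n := (a : ZMod n) with hbdef
  constructor
  · rintro ⟨x, hx⟩
    have h : b ^ 2 * (x : ZMod n) = b := by
      have := (ZMod.intCast_eq_intCast_iff _ _ _).2 hx
      push_cast at this
      exact this
    set y : ZMod n := (x : ZMod n) with hydef
    set e : ZMod n := b * y with hedef
    have he : IsIdempotentElem e := by
      unfold IsIdempotentElem
      rw [hedef]
      linear_combination y * h
    set u : ZMod n := b * e + (1 - e) with hudef
    set v : ZMod n := y * e + (1 - e) with hvdef
    have huv : u * v = 1 := by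
      rw [hudef, hvdef, hedef]
      linear_combination (b*y^2 - b*y - y^2 + 2*y) * h
    have hbue : u * e = b := by
      rw [hudef, hedef]
      linear_combination (b*y - y + 1) * h
    set U : (ZMod n)ˣ := ⟨u, v, huv, by rw [mul_comm]; exact huv⟩ with hUdef
    have hU : u ^ n.totient = 1 := by
      have h2 := congrArg Units.val (ZMod.pow_totient U)
      rw [Units.val_pow_eq_pow_val] at h2
      exact h2
    calc b ^ (n.totient + 1) = (u * e) ^ (n.totient + 1) := by rw [hbue]
      _ = u ^ (n.totient + 1) * e ^ (n.totient + 1) := by rw [mul_pow]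
      _ = u ^ n.totient * u * e := by rw [he.pow_succ_eq, pow_succ]
      _ = u * e := by rw [hU, one_mul]
      _ = b := hbue
  · intro hb
    refine ⟨(a : ℤ) ^ (n.totient - 1), ?_⟩
    rw [← ZMod.intCast_eq_intCast_iff]
    push_cast
    rw [← hbdef]
    rw [← pow_add]
    have : 2 + (n.totient - 1) = n.totient + 1 := by omega
    rw [this, hb]
end

section
/- The arithmetic function ϱ is multiplicative, and for every prime power p^ν with ν ≥ 1, ϱ(p^ν) = p^ν − p^{ν−1} + 1 = φ(p^ν) + 1. -/
open Finset

lemma regular_iff (n : ℕ) (a : ℤ) :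
    IsRegularMod (n : ℤ) a ↔ ∃ x : ZMod n, (a : ZMod n) ^ 2 * x = (a : ZMod n) := by
  constructor
  · rintro ⟨x, hx⟩
    refine ⟨(x : ℤ) |> Int.cast, ?_⟩
    have := (ZMod.intCast_eq_intCast_iff _ _ n).mpr hx
    push_cast at this
    exact this
  · rintro ⟨x, hx⟩
    obtain ⟨y, rfl⟩ := ZMod.intCast_surjective x
    exact ⟨y, (ZMod.intCast_eq_intCast_iff _ _ n).mp (by push_cast; exact hx)⟩

open Classical in
lemma rho_eq (n : ℕ) [NeZero n] :
    rho n = (Finset.univ.filter fun b : ZMod n => ∃ x, b ^ 2 * x = b).card := by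
  rw [rho]
  refine Finset.card_bij (fun a _ => (a : ZMod n)) ?_ ?_ ?_
  · intro a ha
    simp only [mem_filter] at ha ⊢
    refine ⟨mem_univ _, ?_⟩
    have := (regular_iff n a).mp ha.2
    simpa using this
  · intro a ha b hb hab
    simp only [mem_filter, mem_Icc] at ha hb
    rw [ZMod.natCast_eq_natCast_iff] at hab
    have hd : (n : ℤ) ∣ (b : ℤ) - (a : ℤ) := (Nat.modEq_iff_dvd).mp hab
    have := Int.eq_zero_of_abs_lt_dvd hd (by
      have h1 := ha.1.1; have h2 := ha.1.2; have h3 := hb.1.1; have h4 := hb.1.2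
      rw [abs_lt]; omega)
    omega
  · intro b hb
    simp only [mem_filter, mem_univ, true_and] at hb
    by_cases h0 : b = 0
    · refine ⟨n, ?_, by simp [h0]⟩
      simp only [mem_filter, mem_Icc]
      refine ⟨⟨Nat.one_le_iff_ne_zero.mpr (NeZero.ne n), le_rfl⟩, ?_⟩
      rw [regular_iff]
      simpa [h0] using hb
    · refine ⟨b.val, ?_, by simp [ZMod.natCast_zmod_val]⟩
      simp only [mem_filter, mem_Icc]
      have hv : (b.val : ZMod n) = b := ZMod.natCast_zmod_val b
      refine ⟨⟨?_, (b.val_lt).le⟩, ?_⟩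
      · have : b.val ≠ 0 := fun h => h0 (by rwa [ZMod.val_eq_zero] at h)
        omega
      · rw [regular_iff]; push_cast; rw [hv]; exact hb

open Classical in
lemma rho_mul (m n : ℕ) [NeZero m] [NeZero n] (h : Nat.Coprime m n) :
    rho (m * n) = rho m * rho n := by
  haveI : NeZero (m * n) := ⟨mul_ne_zero (NeZero.ne m) (NeZero.ne n)⟩
  rw [rho_eq, rho_eq, rho_eq]
  classical
  have key : ∀ (k : ℕ) [NeZero k], (Finset.univ.filter fun b : ZMod k => ∃ x, b ^ 2 * x = b).card
      = Fintype.card {b : ZMod k // ∃ x, b ^ 2 * x = b} := fun k _ =>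
    (Fintype.card_subtype _).symm
  rw [key, key, key]
  let e := ZMod.chineseRemainder h
  have e1 : {b : ZMod (m * n) // ∃ x, b ^ 2 * x = b}
      ≃ {c : ZMod m × ZMod n // ∃ x, c ^ 2 * x = c} := by
    refine Equiv.subtypeEquiv e.toEquiv (fun b => ?_)
    show (∃ x, b ^ 2 * x = b) ↔ ∃ x, (e b) ^ 2 * x = e b
    constructor
    · rintro ⟨x, hx⟩
      exact ⟨e x, by rw [← map_pow, ← map_mul, hx]⟩
    · rintro ⟨x, hx⟩
      refine ⟨e.symm x, ?_⟩
      apply e.injective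
      rw [map_mul, map_pow, RingEquiv.apply_symm_apply, hx]
  have e2 : {c : ZMod m × ZMod n // ∃ x, c ^ 2 * x = c}
      ≃ {a : ZMod m // ∃ x, a ^ 2 * x = a} × {b : ZMod n // ∃ x, b ^ 2 * x = b} := by
    refine (Equiv.subtypeEquivRight (fun c => ?_)).trans
      (Equiv.subtypeProdEquivProd (p := fun a : ZMod m => ∃ x, a ^ 2 * x = a)
        (q := fun b : ZMod n => ∃ x, b ^ 2 * x = b))
    constructor
    · rintro ⟨x, hx⟩
      rw [Prod.ext_iff] at hx
      exact ⟨⟨x.1, by simpa using hx.1⟩, ⟨x.2, by simpa using hx.2⟩⟩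
    · rintro ⟨⟨x1, h1⟩, ⟨x2, h2⟩⟩
      exact ⟨(x1, x2), by ext <;> simpa⟩
  rw [Fintype.card_congr (e1.trans e2), Fintype.card_prod]

lemma rho_one : rho 1 = 1 := by
  classical
  rw [rho_eq]
  rw [Finset.filter_true_of_mem (fun b _ => ⟨0, Subsingleton.elim _ _⟩)]
  simp

lemma regular_prime_pow_iff (p ν : ℕ) (hp : p.Prime) (hν : 1 ≤ ν) (b : ZMod (p ^ ν)) :
    (∃ x, b ^ 2 * x = b) ↔ (b = 0 ∨ IsUnit b) := by
  haveI : NeZero (p ^ ν) := ⟨pow_ne_zero _ hp.pos.ne'⟩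
  constructor
  · rintro ⟨x, hx⟩
    by_cases h0 : b = 0
    · exact Or.inl h0
    right
    by_contra hu
    -- p divides b.val
    have hb : ¬ Nat.Coprime b.val (p ^ ν) := by
      intro hc
      exact hu (by rw [← ZMod.natCast_zmod_val b]; exact (ZMod.isUnit_iff_coprime _ _).mpr hc)
    have hpd : p ∣ b.val := by
      by_contra hpd
      exact hb ((Nat.coprime_pow_right_iff hν _ _).mpr
        ((Nat.Prime.coprime_iff_not_dvd hp).mpr hpd).symm)
    obtain ⟨w, hw⟩ := hpd
    have hbw : b = (p : ZMod (p ^ ν)) * (w : ZMod (p ^ ν)) := by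
      rw [← ZMod.natCast_zmod_val b, hw]; push_cast; ring
    -- (p*c - 1) is a unit for any c
    have key : ∀ c : ZMod (p ^ ν), IsUnit ((p : ZMod (p ^ ν)) * c - 1) := by
      intro c
      have hz : ((p : ZMod (p ^ ν)) * c) ^ ν = 0 := by
        rw [mul_pow, ← Nat.cast_pow, ZMod.natCast_self, zero_mul]
      have hg := geom_sum_mul ((p : ZMod (p ^ ν)) * c) ν
      rw [hz] at hg
      exact IsUnit.of_mul_eq_one
        (-(∑ i ∈ Finset.range ν, ((p : ZMod (p ^ ν)) * c) ^ i)) (by linear_combination -hg)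
    obtain ⟨u, hu'⟩ := key ((w : ZMod (p ^ ν)) * x)
    have hz : b * ((p : ZMod (p ^ ν)) * ((w : ZMod (p ^ ν)) * x) - 1) = 0 := by
      linear_combination hx - b * x * hbw
    rw [← hu'] at hz
    exact h0 ((Units.mul_left_eq_zero u).mp hz)
  · rintro (rfl | hu)
    · exact ⟨0, by ring⟩
    · obtain ⟨u, rfl⟩ := hu
      exact ⟨(↑u⁻¹ : ZMod (p ^ ν)), by
        rw [sq, mul_assoc, Units.mul_inv, mul_one]⟩

lemma rho_prime_pow (p ν : ℕ) (hp : p.Prime) (hν : 1 ≤ ν) :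
    rho (p ^ ν) = Nat.totient (p ^ ν) + 1 := by
  haveI : NeZero (p ^ ν) := ⟨pow_ne_zero _ hp.pos.ne'⟩
  haveI : Fact (1 < p ^ ν) := ⟨Nat.one_lt_pow (by omega) hp.one_lt⟩
  classical
  rw [rho_eq]
  have hfe : (Finset.univ.filter fun b : ZMod (p ^ ν) => ∃ x, b ^ 2 * x = b)
      = insert (0 : ZMod (p ^ ν)) (Finset.univ.filter IsUnit) := by
    ext b
    simp [regular_prime_pow_iff p ν hp hν b, or_comm]
  rw [hfe, Finset.card_insert_of_notMem (by simp [not_isUnit_zero])]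
  have hcu : (Finset.univ.filter (IsUnit : ZMod (p ^ ν) → Prop)).card
      = Fintype.card (ZMod (p ^ ν))ˣ := by
    rw [Fintype.card, eq_comm]
    refine Finset.card_bij (fun u _ => (u : ZMod (p ^ ν))) ?_ ?_ ?_
    · intro u _; simp [Units.isUnit]
    · intro u _ v _ huv; exact Units.ext huv
    · intro b hb
      simp only [mem_filter, mem_univ, true_and] at hb
      obtain ⟨u, rfl⟩ := hb
      exact ⟨u, mem_univ _, rfl⟩
  rw [hcu, ZMod.card_units_eq_totient]

theorem rho_multiplicative_and_prime_pow :
    (rho 1 = 1 ∧ ∀ m n : ℕ, Nat.Coprime m n → rho (m * n) = rho m * rho n) ∧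
    ∀ p ν : ℕ, p.Prime → 1 ≤ ν →
      rho (p ^ ν) = p ^ ν - p ^ (ν - 1) + 1 ∧
      rho (p ^ ν) = Nat.totient (p ^ ν) + 1 := by
  constructor
  · refine ⟨rho_one, fun m n hmn => ?_⟩
    rcases Nat.eq_zero_or_pos m with rfl | hm
    · have : n = 1 := by simpa [Nat.Coprime] using hmn
      subst this; simp [rho_one]
    rcases Nat.eq_zero_or_pos n with rfl | hn
    · have : m = 1 := by simpa [Nat.Coprime] using hmn
      subst this; simp [rho_one]
    haveI : NeZero m := ⟨hm.ne'⟩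
    haveI : NeZero n := ⟨hn.ne'⟩
    exact rho_mul m n hmn
  · intro p ν hp hν
    have h2 := rho_prime_pow p ν hp hν
    refine ⟨?_, h2⟩
    rw [h2, Nat.totient_prime_pow hp hν]
    have hpow : p ^ ν = p ^ (ν - 1) * p := by
      rw [← pow_succ]; congr 1; omega
    rw [hpow]
    have hle : p ^ (ν - 1) ≤ p ^ (ν - 1) * p := Nat.le_mul_of_pos_right _ hp.pos
    zify [hle, hp.one_le]
    ring
end

section
/- For every integer n ≥ 1, ϱ(n) = ∑_{d || n} φ(d), where the sum is over the unitary divisors d of n. -/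
/-- Solvability of the linear congruence `a² x ≡ a (mod n)` is equivalent to
`gcd(a², n) ∣ a`. -/
lemma isRegularMod_iff_gcd_sq_dvd (n a : ℕ) :
    IsRegularMod (n : ℤ) (a : ℤ) ↔ Nat.gcd (a ^ 2) n ∣ a := by
  rw [IsRegularMod, ← Int.gcd_natCast_natCast]
  push_cast
  rw [Int.gcd_dvd_iff]
  constructor
  · rintro ⟨x, hx⟩
    obtain ⟨y, hy⟩ := (Int.modEq_iff_dvd.mp hx)
    exact ⟨x, y, by linarith⟩
  · rintro ⟨x, y, h⟩
    exact ⟨x, Int.modEq_iff_dvd.mpr ⟨y, by linarith⟩⟩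

/-- For positive `a`, `gcd(a², n) ∣ a` holds iff `gcd(a, n)` is a unitary divisor of `n`. -/
lemma gcd_sq_dvd_iff_unitary (n a : ℕ) (ha : 0 < a) :
    Nat.gcd (a ^ 2) n ∣ a ↔ Nat.Coprime (Nat.gcd a n) (n / Nat.gcd a n) := by
  set g := Nat.gcd a n with hg
  have hg0 : 0 < g := Nat.gcd_pos_of_pos_left _ ha
  set a' := a / g with ha'
  set m := n / g with hm
  have haa : a = g * a' := (Nat.mul_div_cancel' (Nat.gcd_dvd_left a n)).symm
  have hnn : n = g * m := (Nat.mul_div_cancel' (Nat.gcd_dvd_right a n)).symm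
  have hcop : Nat.Coprime a' m := Nat.coprime_div_gcd_div_gcd hg0
  have key : Nat.gcd (a ^ 2) n = g * Nat.gcd g m := by
    rw [haa, hnn, mul_pow, sq g, mul_assoc, Nat.gcd_mul_left]
    congr 1
    exact Nat.Coprime.gcd_mul_right_cancel g (hcop.pow_left 2)
  rw [key, haa, Nat.mul_dvd_mul_iff_left hg0]
  constructor
  · intro h
    have : Nat.gcd g m ∣ Nat.gcd a' m := Nat.dvd_gcd h (Nat.gcd_dvd_right g m)
    rw [hcop] at this
    exact Nat.eq_one_of_dvd_one this
  · intro h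
    rw [h]
    exact one_dvd _

open Finset in
/-- The count of `a ∈ [1, n]` whose gcd with `n` is a unitary divisor equals the sum of
totients over unitary divisors. -/
lemma card_unitary_gcd_eq_sum (n : ℕ) (hn : 1 ≤ n) :
    #{a ∈ Finset.Icc 1 n | Nat.Coprime (Nat.gcd a n) (n / Nat.gcd a n)}
      = ∑ d ∈ n.divisors.filter (fun d => Nat.gcd d (n / d) = 1), Nat.totient d := by
  have hn0 : n ≠ 0 := Nat.one_le_iff_ne_zero.mp hn
  -- Switch from Icc 1 n to range n
  have hIcc : #{a ∈ Finset.Icc 1 n | Nat.Coprime (Nat.gcd a n) (n / Nat.gcd a n)}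
      = #{a ∈ Finset.range n | Nat.Coprime (Nat.gcd a n) (n / Nat.gcd a n)} := by
    have h1 : Finset.Icc 1 n = insert n (Finset.Ico 1 n) := by
      rw [Finset.Ico_insert_right hn]
    have h2 : Finset.range n = insert 0 (Finset.Ico 1 n) := by
      rw [Finset.range_eq_Ico, ← Finset.insert_Ico_add_one_left_eq_Ico hn, zero_add]
    have hQn : Nat.Coprime (Nat.gcd n n) (n / Nat.gcd n n) := by
      simp [Nat.gcd_self, Nat.div_self (Nat.pos_of_ne_zero hn0), Nat.coprime_one_right]
    have hQ0 : Nat.Coprime (Nat.gcd 0 n) (n / Nat.gcd 0 n) := by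
      simp [Nat.div_self (Nat.pos_of_ne_zero hn0), Nat.coprime_one_right]
    rw [h1, h2, Finset.filter_insert, Finset.filter_insert, if_pos hQn, if_pos hQ0,
      Finset.card_insert_of_notMem (by simp), Finset.card_insert_of_notMem (by simp)]
  rw [hIcc]
  -- fiberwise count
  set S := n.divisors.filter (fun d => Nat.gcd d (n / d) = 1) with hS
  have hfib : #{a ∈ Finset.range n | Nat.Coprime (Nat.gcd a n) (n / Nat.gcd a n)}
      = ∑ d ∈ S, #{k ∈ Finset.range n | Nat.gcd n k = d} := by
    rw [Finset.card_eq_sum_card_fiberwise (f := fun a => Nat.gcd a n) (t := S)]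
    · apply Finset.sum_congr rfl
      intro d hd
      rw [hS, Finset.mem_filter, Nat.mem_divisors] at hd
      rw [Finset.filter_filter]
      congr 1
      apply Finset.filter_congr
      intro k hk
      constructor
      · rintro ⟨-, h⟩; rw [Nat.gcd_comm] at h; exact h
      · intro h
        rw [Nat.gcd_comm] at h
        exact ⟨by rw [h]; exact hd.2, h⟩
    · intro a ha
      rw [Finset.mem_coe, Finset.mem_filter] at ha
      rw [hS, Finset.mem_coe, Finset.mem_filter, Nat.mem_divisors]
      exact ⟨⟨Nat.gcd_dvd_right a n, hn0⟩, ha.2⟩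
  rw [hfib]
  -- each fiber has totient (n/d) elements
  have : ∑ d ∈ S, #{k ∈ Finset.range n | Nat.gcd n k = d} = ∑ d ∈ S, Nat.totient (n / d) := by
    apply Finset.sum_congr rfl
    intro d hd
    rw [hS, Finset.mem_filter, Nat.mem_divisors] at hd
    exact (Nat.totient_div_of_dvd hd.1.1).symm
  rw [this]
  -- reindex d ↦ n / d
  apply Finset.sum_nbij' (i := fun d => n / d) (j := fun d => n / d)
  · intro d hd
    rw [hS, Finset.mem_filter, Nat.mem_divisors] at hd ⊢
    refine ⟨⟨Nat.div_dvd_of_dvd hd.1.1, hn0⟩, ?_⟩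
    rw [Nat.div_div_self hd.1.1 hn0, Nat.gcd_comm]
    exact hd.2
  · intro d hd
    rw [hS, Finset.mem_filter, Nat.mem_divisors] at hd ⊢
    refine ⟨⟨Nat.div_dvd_of_dvd hd.1.1, hn0⟩, ?_⟩
    rw [Nat.div_div_self hd.1.1 hn0, Nat.gcd_comm]
    exact hd.2
  · intro d hd
    rw [hS, Finset.mem_filter, Nat.mem_divisors] at hd
    exact Nat.div_div_self hd.1.1 hn0
  · intro d hd
    rw [hS, Finset.mem_filter, Nat.mem_divisors] at hd
    exact Nat.div_div_self hd.1.1 hn0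
  · intro d hd; rfl

theorem rho_eq_sum_totient_unitary (n : ℕ) (hn : 1 ≤ n) :
    rho n = ∑ d ∈ n.divisors.filter (fun d => Nat.gcd d (n / d) = 1), Nat.totient d := by
  classical
  rw [rho, Finset.filter_congr_decidable]
  rw [show ((Finset.Icc 1 n).filter fun a : ℕ => IsRegularMod (n : ℤ) (a : ℤ))
      = (Finset.Icc 1 n).filter
          (fun a => Nat.Coprime (Nat.gcd a n) (n / Nat.gcd a n)) from
    Finset.filter_congr fun a ha => by
      rw [Finset.mem_Icc] at ha
      rw [isRegularMod_iff_gcd_sq_dvd, gcd_sq_dvd_iff_unitary n a ha.1]]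
  exact card_unitary_gcd_eq_sum n hn
end

section
/- For every integer n ≥ 1, the sum S(n) of all integers a with 1 ≤ a ≤ n that are regular (mod n) equals n(ϱ(n) + 1)/2. -/
lemma isRegularMod_sub (n a : ℤ) (h : IsRegularMod n a) : IsRegularMod n (n - a) := by
  obtain ⟨x, hx⟩ := h
  refine ⟨-x, ?_⟩
  have h1 : (n - a : ℤ) ≡ -a [ZMOD n] := by
    have : (n : ℤ) ≡ 0 [ZMOD n] := Int.modEq_zero_iff_dvd.2 dvd_rfl
    simpa using this.sub (Int.ModEq.refl a)
  calc (n - a) ^ 2 * (-x) ≡ (-a) ^ 2 * (-x) [ZMOD n] := (h1.pow 2).mul_right _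
    _ = -(a ^ 2 * x) := by ring
    _ ≡ -a [ZMOD n] := hx.neg
    _ ≡ n - a [ZMOD n] := h1.symm

open Classical in
theorem sum_regular_eq (n : ℕ) (hn : 1 ≤ n) :
    ((∑ a ∈ (Finset.Icc 1 n).filter fun a : ℕ =>
        IsRegularMod (n : ℤ) (a : ℤ), a : ℕ) : ℚ) = n * (rho n + 1) / 2 := by
  set F := (Finset.Icc 1 n).filter fun a : ℕ => IsRegularMod (n : ℤ) (a : ℤ) with hF
  have hnF : n ∈ F := by
    refine Finset.mem_filter.2 ⟨Finset.mem_Icc.2 ⟨hn, le_rfl⟩, ⟨0, ?_⟩⟩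
    have h0 : (n : ℤ) ≡ 0 [ZMOD n] := Int.modEq_zero_iff_dvd.2 dvd_rfl
    simpa using h0.symm
  set G := F.erase n with hG
  have hGmem : ∀ a ∈ G, 1 ≤ a ∧ a < n ∧ IsRegularMod (n : ℤ) (a : ℤ) := by
    intro a ha
    obtain ⟨hne, haF⟩ := Finset.mem_erase.1 ha
    obtain ⟨hicc, hreg⟩ := Finset.mem_filter.1 haF
    obtain ⟨h1, h2⟩ := Finset.mem_Icc.1 hicc
    exact ⟨h1, lt_of_le_of_ne h2 hne, hreg⟩
  have hmap : ∀ a ∈ G, n - a ∈ G := by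
    intro a ha
    obtain ⟨h1, h2, hreg⟩ := hGmem a ha
    refine Finset.mem_erase.2 ⟨by omega, Finset.mem_filter.2 ⟨Finset.mem_Icc.2 ⟨by omega, by omega⟩, ?_⟩⟩
    have : ((n - a : ℕ) : ℤ) = (n : ℤ) - a := by omega
    rw [this]
    exact isRegularMod_sub _ _ hreg
  have hsymm : ∑ a ∈ G, a = ∑ a ∈ G, (n - a) := by
    refine Finset.sum_nbij' (i := fun a => n - a) (j := fun a => n - a) hmap hmap ?_ ?_ ?_
    · intro a ha; have := hGmem a ha; omega
    · intro a ha; have := hGmem a ha; omega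
    · intro a ha; have := hGmem a ha; omega
  have hsum2 : 2 * ∑ a ∈ G, a = G.card * n := by
    have : ∑ a ∈ G, a + ∑ a ∈ G, (n - a) = ∑ a ∈ G, n := by
      rw [← Finset.sum_add_distrib]
      refine Finset.sum_congr rfl fun a ha => ?_
      have := hGmem a ha; omega
    rw [two_mul]
    nth_rewrite 2 [hsymm]
    rw [this, Finset.sum_const, smul_eq_mul]
  have hcard : G.card = rho n - 1 := by
    rw [hG, Finset.card_erase_of_mem hnF]; rfl
  have hrho : 1 ≤ rho n := by
    have : 0 < F.card := Finset.card_pos.2 ⟨n, hnF⟩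
    exact this
  have hsplit : ∑ a ∈ F, a = n + ∑ a ∈ G, a := by
    rw [hG, ← Finset.add_sum_erase F _ hnF]
  -- now compute in ℚ
  have hGQ : (∑ a ∈ G, (a : ℚ)) = (rho n - 1 : ℚ) * n / 2 := by
    have := congrArg (fun m : ℕ => (m : ℚ)) hsum2
    push_cast at this
    rw [hcard] at this
    have hc : ((rho n - 1 : ℕ) : ℚ) = (rho n : ℚ) - 1 := by
      push_cast [hrho]; ring
    rw [hc] at this
    linarith
  rw [hsplit]
  push_cast
  rw [hGQ]
  ring
end

section
/- For every integer n ≥ 1, ϱ(n)/φ(n) = ∑_{d || n} 1/φ(d), where the sum is over the unitary divisors d of n. -/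
lemma reg_iff (n a : ℕ) (hn : 0 < n) :
    IsRegularMod (n : ℤ) (a : ℤ) ↔ Nat.Coprime (Nat.gcd a n) (n / Nat.gcd a n) := by
  set g := Nat.gcd a n with hg
  have hgpos : 0 < g := Nat.gcd_pos_of_pos_right a hn
  have hga : g ∣ a := Nat.gcd_dvd_left a n
  have hgn : g ∣ n := Nat.gcd_dvd_right a n
  set m := n / g with hm
  set a' := a / g with ha'
  have hn_eq : n = g * m := (Nat.mul_div_cancel' hgn).symm
  have ha_eq : a = g * a' := (Nat.mul_div_cancel' hga).symm
  have hcop : Nat.Coprime a' m := Nat.coprime_div_gcd_div_gcd hgpos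
  constructor
  · rintro ⟨x, hx⟩
    -- n ∣ a - a^2 x = a * (1 - a x)
    have hdvd : (n : ℤ) ∣ (a : ℤ) * (1 - a * x) := by
      have := (Int.ModEq.dvd hx)  -- n ∣ a^2 * x - a ?
      have h2 : (n : ℤ) ∣ (a : ℤ) - a ^ 2 * x := Int.ModEq.dvd hx
      have : (a : ℤ) - a ^ 2 * x = a * (1 - a * x) := by ring
      rwa [this] at h2
    have hdvd' : (m : ℤ) ∣ (a' : ℤ) * (1 - a * x) := by
      have h3 : ((g : ℤ) * m) ∣ ((g : ℤ) * (a' * (1 - a * x))) := by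
        have : ((g : ℤ) * (a' * (1 - a * x))) = (a : ℤ) * (1 - a * x) := by
          push_cast [ha_eq]; ring
        rw [this, ← Nat.cast_mul, ← hn_eq]; exact hdvd
      exact (mul_dvd_mul_iff_left (by exact_mod_cast hgpos.ne' : (g : ℤ) ≠ 0)).mp h3
    have hcopZ : IsCoprime (a' : ℤ) (m : ℤ) := by
      rw [Int.isCoprime_iff_gcd_eq_one, Int.gcd_natCast_natCast]; exact hcop
    have hm1 : (m : ℤ) ∣ (1 - a * x) := (hcopZ.symm.dvd_of_dvd_mul_left hdvd')
    -- then a is invertible mod m, so coprime a m, hence coprime g m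
    obtain ⟨k, hk⟩ := hm1
    have hcam : IsCoprime ((a : ℕ) : ℤ) (m : ℤ) := by
      refine ⟨x, k, ?_⟩
      have : (1 : ℤ) = a * x + m * k := by rw [← hk]; ring
      linarith [this]
    have : Nat.Coprime a m := by
      rwa [Int.isCoprime_iff_gcd_eq_one, Int.gcd_natCast_natCast] at hcam
    exact Nat.Coprime.coprime_dvd_left hga this
  · intro hgm
    have hcam : Nat.Coprime a m := by
      rw [ha_eq]; exact Nat.Coprime.mul hgm hcop
    have hZ : IsCoprime ((a : ℕ) : ℤ) (m : ℤ) := by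
      rw [Int.isCoprime_iff_gcd_eq_one, Int.gcd_natCast_natCast]; exact hcam
    obtain ⟨u, v, huv⟩ := hZ
    refine ⟨u, ?_⟩
    have hmdvd : (m : ℤ) ∣ (a : ℤ) * u - 1 := ⟨-v, by linarith [huv]⟩
    have hgdvd : (g : ℤ) ∣ (a : ℤ) := by exact_mod_cast Int.natCast_dvd_natCast.mpr hga
    have : (n : ℤ) ∣ (a : ℤ) ^ 2 * u - a := by
      have h4 : ((g : ℤ) * m) ∣ ((a : ℤ) * ((a : ℤ) * u - 1)) :=
        mul_dvd_mul hgdvd hmdvd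
      have h5 : ((a : ℤ) * ((a : ℤ) * u - 1)) = (a : ℤ) ^ 2 * u - a := by ring
      rw [h5] at h4
      rwa [← Nat.cast_mul, ← hn_eq] at h4
    exact Int.modEq_iff_dvd.mpr (by simpa using this.neg_right)

open Finset in
lemma rho_eq_s9 (n : ℕ) (hn : 1 ≤ n) :
    rho n = ∑ d ∈ n.divisors.filter (fun d => Nat.gcd d (n / d) = 1),
      Nat.totient (n / d) := by
  classical
  have hn0 : 0 < n := hn
  set Q : ℕ → Prop := fun a => Nat.Coprime (Nat.gcd a n) (n / Nat.gcd a n) with hQ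
  have h1 : rho n = ((Finset.Icc 1 n).filter Q).card := by
    unfold rho
    congr 1
    apply Finset.filter_congr
    intro a _
    simpa using reg_iff n a hn0
  have hgcdmod : ∀ a : ℕ, Nat.gcd (a % n) n = Nat.gcd a n := by
    intro a
    rw [Nat.gcd_comm a n, Nat.gcd_rec n a]
  have h2 : ((Finset.Icc 1 n).filter Q).card = ((Finset.range n).filter Q).card := by
    apply Finset.card_bij (fun a _ => a % n)
    · intro a ha
      simp only [mem_filter, mem_Icc] at ha ⊢
      simp only [mem_range]
      exact ⟨Nat.mod_lt a hn0, by rw [hQ]; simpa [hgcdmod a] using ha.2⟩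
    · intro a ha b hb hab
      simp only [mem_filter, mem_Icc] at ha hb
      have ha1 := ha.1
      have hb1 := hb.1
      have hab' : a % n = b % n := hab
      have hma : a % n = if a < n then a else 0 := by
        split
        · exact Nat.mod_eq_of_lt ‹_›
        · have : a = n := by omega
          simp [this]
      have hmb : b % n = if b < n then b else 0 := by
        split
        · exact Nat.mod_eq_of_lt ‹_›
        · have : b = n := by omega
          simp [this]
      rw [hma, hmb] at hab'
      split_ifs at hab' <;> omega
    · intro b hb
      simp only [mem_filter, mem_range] at hb
      rcases Nat.eq_zero_or_pos b with rfl | hbpos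
      · refine ⟨n, ?_, by simp⟩
        simp only [mem_filter, mem_Icc]
        refine ⟨⟨hn, le_refl n⟩, ?_⟩
        show Nat.Coprime (Nat.gcd n n) (n / Nat.gcd n n)
        have h0 : Nat.Coprime (Nat.gcd 0 n) (n / Nat.gcd 0 n) := hb.2
        simpa using h0
      · refine ⟨b, ?_, Nat.mod_eq_of_lt hb.1⟩
        simp only [mem_filter, mem_Icc]
        exact ⟨⟨hbpos, le_of_lt hb.1⟩, hb.2⟩
  have h3 : ((Finset.range n).filter Q).card =
      ∑ d ∈ n.divisors.filter (fun d => Nat.gcd d (n / d) = 1),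
        (((Finset.range n).filter Q).filter (fun a => Nat.gcd n a = d)).card := by
    apply Finset.card_eq_sum_card_fiberwise
    intro a ha
    simp only [mem_coe, mem_filter, mem_range] at ha ⊢
    refine ⟨Nat.mem_divisors.mpr ⟨Nat.gcd_dvd_left n a, hn0.ne'⟩, ?_⟩
    rw [Nat.gcd_comm n a]
    exact ha.2
  have h4 : ∀ d ∈ n.divisors.filter (fun d => Nat.gcd d (n / d) = 1),
      (((Finset.range n).filter Q).filter (fun a => Nat.gcd n a = d)).card
        = Nat.totient (n / d) := by
    intro d hd
    simp only [mem_filter, Nat.mem_divisors] at hd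
    rw [Finset.filter_filter]
    have hset : ((Finset.range n).filter (fun a => Q a ∧ Nat.gcd n a = d))
        = ((Finset.range n).filter (fun a => Nat.gcd n a = d)) := by
      apply Finset.filter_congr
      intro a _
      constructor
      · exact fun h => h.2
      · intro h
        refine ⟨?_, h⟩
        show Nat.Coprime (Nat.gcd a n) (n / Nat.gcd a n)
        rw [Nat.gcd_comm a n, h]
        exact hd.2
    rw [hset, ← Nat.totient_div_of_dvd hd.1.1]
  rw [h1, h2, h3]
  exact Finset.sum_congr rfl h4

theorem rho_div_totient_eq_sum (n : ℕ) (hn : 1 ≤ n) :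
    (rho n : ℚ) / (Nat.totient n : ℚ) =
      ∑ d ∈ n.divisors.filter (fun d => Nat.gcd d (n / d) = 1),
        (1 : ℚ) / (Nat.totient d : ℚ) := by
  rw [rho_eq_s9 n hn]
  push_cast
  rw [Finset.sum_div]
  apply Finset.sum_congr rfl
  intro d hd
  simp only [Finset.mem_filter, Nat.mem_divisors] at hd
  have hdvd := hd.1.1
  have hphi : Nat.totient n = Nat.totient d * Nat.totient (n / d) := by
    conv_lhs => rw [← Nat.mul_div_cancel' hdvd]
    exact Nat.totient_mul hd.2
  have hd0 : 0 < d := Nat.pos_of_dvd_of_pos hdvd hn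
  have hnd0 : 0 < n / d := Nat.div_pos (Nat.le_of_dvd hn hdvd) hd0
  have h1 : (Nat.totient d : ℚ) ≠ 0 := by
    exact_mod_cast (Nat.totient_pos.mpr hd0).ne'
  have h2 : (Nat.totient (n / d) : ℚ) ≠ 0 := by
    exact_mod_cast (Nat.totient_pos.mpr hnd0).ne'
  rw [hphi]
  push_cast
  field_simp
end

section
/- liminf_{n → ∞} ϱ(n)/φ(n) = 1. -/
open Filter

lemma isRegularMod_self (n : ℕ) : IsRegularMod (n : ℤ) (n : ℤ) := by
  refine ⟨0, Int.ModEq.symm (Int.modEq_iff_dvd.2 ?_)⟩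
  exact ⟨-1, by ring⟩

lemma isRegularMod_of_coprime {n a : ℕ} (h : Nat.Coprime n a) :
    IsRegularMod (n : ℤ) (a : ℤ) := by
  have hc : IsCoprime (a : ℤ) (n : ℤ) := Nat.isCoprime_iff_coprime.2 h.symm
  obtain ⟨u, v, huv⟩ := hc
  refine ⟨u, Int.modEq_iff_dvd.2 ?_⟩
  exact ⟨a * v, by linear_combination (-(a : ℤ)) * huv⟩

lemma totient_le_rho {n : ℕ} (hn : 1 ≤ n) : n.totient ≤ rho n := by
  classical
  rw [Nat.totient, rho]
  apply Finset.card_le_card_of_injOn (fun a => if a = 0 then n else a)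
  · intro a ha
    simp only [Finset.mem_coe, Finset.mem_filter, Finset.mem_range] at ha
    obtain ⟨han, hcop⟩ := ha
    by_cases h0 : a = 0
    · simp only [h0, if_pos rfl, Finset.mem_coe, Finset.mem_filter, Finset.mem_Icc]
      exact ⟨⟨hn, le_refl n⟩, isRegularMod_self n⟩
    · simp only [if_neg h0, Finset.mem_coe, Finset.mem_filter, Finset.mem_Icc]
      exact ⟨⟨Nat.one_le_iff_ne_zero.2 h0, le_of_lt han⟩, isRegularMod_of_coprime hcop⟩
  · intro a ha b hb hab
    simp only [Finset.mem_coe, Finset.mem_filter, Finset.mem_range] at ha hb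
    obtain ⟨ha1, -⟩ := ha
    obtain ⟨hb1, -⟩ := hb
    simp only at hab
    split_ifs at hab with h0 h1 h1 <;> omega

lemma rho_prime {p : ℕ} (hp : p.Prime) : rho p = p := by
  classical
  rw [rho, Finset.filter_true_of_mem, Nat.card_Icc]
  · omega
  · intro a ha
    rw [Finset.mem_Icc] at ha
    rcases eq_or_lt_of_le ha.2 with h | h
    · rw [h]; exact isRegularMod_self p
    · apply isRegularMod_of_coprime
      rw [Nat.Prime.coprime_iff_not_dvd hp]
      intro hd
      exact absurd (Nat.le_of_dvd (by omega) hd) (by omega)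

lemma ratio_prime {p : ℕ} (hp : p.Prime) :
    (rho p : ℝ) / (Nat.totient p : ℝ) = (p : ℝ) / ((p : ℝ) - 1) := by
  rw [rho_prime hp, Nat.totient_prime hp, Nat.cast_sub hp.one_le, Nat.cast_one]

theorem liminf_rho_div_totient :
    Filter.liminf (fun n : ℕ => (rho n : ℝ) / (Nat.totient n : ℝ)) Filter.atTop = 1 := by
  set f : ℕ → ℝ := fun n => (rho n : ℝ) / (Nat.totient n : ℝ) with hf
  have hone : ∀ n : ℕ, 1 ≤ n → (1 : ℝ) ≤ f n := by
    intro n hn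
    have ht : 0 < n.totient := Nat.totient_pos.2 hn
    rw [hf]
    rw [one_le_div (by exact_mod_cast ht)]
    exact_mod_cast totient_le_rho hn
  have hfreq2 : ∃ᶠ n in atTop, f n ≤ 2 := by
    rw [Filter.frequently_atTop]
    intro N
    obtain ⟨p, hpN, hp⟩ := Nat.exists_infinite_primes (N + 2)
    refine ⟨p, by omega, ?_⟩
    show (rho p : ℝ) / (Nat.totient p : ℝ) ≤ 2
    rw [ratio_prime hp]
    have h2 : (2 : ℝ) ≤ (p : ℝ) := by exact_mod_cast hp.two_le
    rw [div_le_iff₀ (by linarith)]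
    linarith
  have hcob : IsCoboundedUnder (· ≥ ·) atTop f :=
    Filter.IsCoboundedUnder.of_frequently_le hfreq2
  have hbdd : IsBoundedUnder (· ≥ ·) atTop f := by
    refine Filter.isBoundedUnder_of ⟨0, fun (m : ℕ) => ?_⟩
    show (0:ℝ) ≤ (rho m : ℝ) / (Nat.totient m : ℝ)
    positivity
  refine le_antisymm ?_ ?_
  · refine le_of_forall_pos_le_add fun ε hε => ?_
    apply Filter.liminf_le_of_frequently_le _ hbdd
    rw [Filter.frequently_atTop]
    intro N
    obtain ⟨M, hM⟩ := exists_nat_ge ((1 + ε) / ε)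
    obtain ⟨p, hpN, hp⟩ := Nat.exists_infinite_primes (max N M + 2)
    refine ⟨p, by omega, ?_⟩
    show (rho p : ℝ) / (Nat.totient p : ℝ) ≤ 1 + ε
    rw [ratio_prime hp]
    have h2 : (2 : ℝ) ≤ (p : ℝ) := by exact_mod_cast hp.two_le
    have hMp : (M : ℝ) ≤ (p : ℝ) := by
      exact_mod_cast (le_trans (le_max_right N M) (by omega) : M ≤ p)
    have hεp : (1 + ε) ≤ ε * p := by
      rw [div_le_iff₀ hε] at hM
      nlinarith
    rw [div_le_iff₀ (by linarith)]
    nlinarith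
  · exact Filter.le_liminf_of_le hcob ((eventually_ge_atTop 1).mono hone)
end

section
/- For every integer n > 1, φ(n) < ϱ(n) ≤ n; moreover, ϱ(n) = n if and only if n is squarefree. -/
lemma reg_of_coprime (n a : ℕ) (h : Nat.Coprime a n) : IsRegularMod (n : ℤ) (a : ℤ) := by
  obtain ⟨u, v, huv⟩ := (Nat.isCoprime_iff_coprime.mpr h)
  refine ⟨u, Int.modEq_iff_dvd.mpr ?_⟩
  have : (a : ℤ) - (a:ℤ)^2 * u = (a:ℤ) * (1 - u * a) := by ring
  rw [this]
  exact Dvd.dvd.mul_left ⟨v, by linarith⟩ _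

lemma reg_of_squarefree (n : ℕ) (hsf : Squarefree n) (a : ℕ) :
    IsRegularMod (n : ℤ) (a : ℤ) := by
  obtain ⟨m, hm⟩ := Nat.gcd_dvd_right a n
  set d := Nat.gcd a n with hd
  have hdm : Nat.Coprime d m := by
    rw [hm] at hsf
    exact (Nat.squarefree_mul_iff.mp hsf).1
  have ham : Nat.Coprime a m := by
    have h1 : Nat.gcd a m ∣ d :=
      Nat.dvd_gcd (Nat.gcd_dvd_left a m) (hm ▸ (Nat.gcd_dvd_right a m).mul_left d)
    have h2 : Nat.gcd a m ∣ Nat.gcd d m := Nat.dvd_gcd h1 (Nat.gcd_dvd_right a m)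
    rw [hdm] at h2
    exact Nat.eq_one_of_dvd_one h2
  obtain ⟨u, v, huv⟩ := (Nat.isCoprime_iff_coprime.mpr ham)
  refine ⟨u, Int.modEq_iff_dvd.mpr ?_⟩
  have key : (a : ℤ) - (a:ℤ)^2 * u = (a:ℤ) * (1 - u * a) := by ring
  rw [key, hm]
  push_cast
  refine (Nat.isCoprime_iff_coprime.mpr hdm).mul_dvd ?_ ?_
  · exact Dvd.dvd.mul_right (Int.natCast_dvd_natCast.mpr (Nat.gcd_dvd_left a n)) _
  · exact Dvd.dvd.mul_left ⟨v, by linarith⟩ _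

theorem totient_lt_rho_le_self (n : ℕ) (hn : 1 < n) :
    Nat.totient n < rho n ∧ rho n ≤ n ∧ (rho n = n ↔ Squarefree n) := by
  classical
  set T := ((Finset.Icc 1 n).filter fun a : ℕ => IsRegularMod (n : ℤ) (a : ℤ)) with hT
  have hrhoT : rho n = T.card := rfl
  have hcardIcc : (Finset.Icc 1 n).card = n := by
    rw [Nat.card_Icc]; omega
  have hle : rho n ≤ n := by
    rw [hrhoT, ← hcardIcc]
    exact Finset.card_filter_le _ _
  have hnT : n ∈ T := by
    refine Finset.mem_filter.mpr ⟨Finset.mem_Icc.mpr ⟨by omega, le_refl n⟩, ⟨0, ?_⟩⟩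
    refine Int.modEq_iff_dvd.mpr ?_
    exact ⟨1, by ring⟩
  -- totient < rho
  have h1 : Nat.totient n < rho n := by
    set S := ((Finset.Icc 1 n).filter fun a : ℕ => Nat.Coprime a n) with hS
    have hScard : S.card = Nat.totient n := by
      rw [Nat.totient_eq_card_coprime]
      have heq : S = Finset.filter (fun a => n.Coprime a) (Finset.range n) := by
        ext a
        simp only [hS, Finset.mem_filter, Finset.mem_Icc, Finset.mem_range]
        constructor
        · rintro ⟨⟨h1, h2⟩, h3⟩
          refine ⟨?_, h3.symm⟩
          rcases eq_or_lt_of_le h2 with rfl | h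
          · have := h3
            rw [Nat.Coprime, Nat.gcd_self] at this
            omega
          · exact h
        · rintro ⟨h1, h2⟩
          have h2' := h2.symm
          have ha : a ≠ 0 := by
            rintro rfl
            rw [Nat.Coprime, Nat.gcd_zero_right] at h2
            omega
          exact ⟨⟨by omega, by omega⟩, h2'⟩
      rw [heq]
    have hsub : S ⊂ T := by
      constructor
      · intro a ha
        obtain ⟨hmem, hcop⟩ := Finset.mem_filter.mp ha
        exact Finset.mem_filter.mpr ⟨hmem, reg_of_coprime n a hcop⟩
      · intro hcon
        have := hcon hnT
        have h4 := (Finset.mem_filter.mp this).2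
        rw [Nat.Coprime, Nat.gcd_self] at h4
        omega
    rw [hrhoT, ← hScard]
    exact Finset.card_lt_card hsub
  refine ⟨h1, hle, ?_, ?_⟩
  · -- rho n = n → Squarefree
    intro hrho
    rw [Nat.squarefree_iff_prime_squarefree]
    rintro p hp ⟨k, hk⟩
    have hTfull : T = Finset.Icc 1 n := by
      apply Finset.eq_of_subset_of_card_le (Finset.filter_subset _ _)
      rw [hcardIcc, ← hT]
      rw [hrhoT] at hrho
      omega
    have hpn : p ≤ n := by
      have hk0 : 0 < k := by
        rcases Nat.eq_zero_or_pos k with rfl | h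
        · omega
        · exact h
      calc p ≤ p * p := Nat.le_mul_of_pos_left p hp.pos
        _ ≤ p * p * k := Nat.le_mul_of_pos_right _ hk0
        _ = n := hk.symm
    have hpT : (p : ℕ) ∈ T := by
      rw [hTfull]
      exact Finset.mem_Icc.mpr ⟨hp.one_lt.le, hpn⟩
    obtain ⟨x, hx⟩ := (Finset.mem_filter.mp hpT).2
    have hdvd : (n : ℤ) ∣ (p : ℤ) - (p:ℤ)^2 * x := Int.modEq_iff_dvd.mp hx
    have hp2n : ((p:ℤ)^2) ∣ (n : ℤ) := by
      refine ⟨(k : ℤ), ?_⟩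
      rw [hk]; push_cast; ring
    have hfin : ((p:ℤ)^2) ∣ (p : ℤ) := by
      have h2 : ((p:ℤ)^2) ∣ (p : ℤ) - (p:ℤ)^2 * x := hp2n.trans hdvd
      have h3 : ((p:ℤ)^2) ∣ (p:ℤ)^2 * x := Dvd.intro x rfl
      have := dvd_add h2 h3
      simpa using this
    have := Int.le_of_dvd (by exact_mod_cast hp.pos) hfin
    have hp2 : (2:ℤ) ≤ (p:ℤ) := by exact_mod_cast hp.two_le
    nlinarith
  · -- Squarefree → rho n = n
    intro hsf
    rw [hrhoT]
    have : T = Finset.Icc 1 n := by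
      apply Finset.filter_true_of_mem
      intro a _
      exact reg_of_squarefree n hsf a
    rw [this, hcardIcc]
end

section
/- For every integer n ≥ 1, √n ≤ ϱ(n) ≤ n. -/
/-- Regularity for residues. -/
def RegRes {R : Type*} [CommRing R] (a : R) : Prop := ∃ x : R, a ^ 2 * x = a

noncomputable def Nreg (n : ℕ) : ℕ := Nat.card {a : ZMod n // RegRes a}

lemma regRes_map {R S : Type*} [CommRing R] [CommRing S] (e : R ≃+* S) (a : R)
    (h : RegRes a) : RegRes (e a) := by
  obtain ⟨x, hx⟩ := h
  exact ⟨e x, by rw [← map_pow, ← map_mul, hx]⟩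

lemma regRes_prod {A B : Type*} [CommRing A] [CommRing B] (s : A × B) :
    RegRes s ↔ RegRes s.1 ∧ RegRes s.2 := by
  constructor
  · rintro ⟨x, hx⟩
    exact ⟨⟨x.1, congrArg Prod.fst hx⟩, ⟨x.2, congrArg Prod.snd hx⟩⟩
  · rintro ⟨⟨x, hx⟩, ⟨y, hy⟩⟩
    exact ⟨(x, y), Prod.ext hx hy⟩

lemma Nreg_mul {a b : ℕ} (h : Nat.Coprime a b) : Nreg (a * b) = Nreg a * Nreg b := by
  let e := ZMod.chineseRemainder h
  have e1 : {r : ZMod (a * b) // RegRes r} ≃ {s : ZMod a × ZMod b // RegRes s.1 ∧ RegRes s.2} := by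
    refine Equiv.subtypeEquiv e.toEquiv fun r => ?_
    rw [← regRes_prod]
    exact ⟨fun hr => regRes_map e r hr, fun hr => by
      simpa using regRes_map e.symm (e r) hr⟩
  have e2 := e1.trans (Equiv.subtypeProdEquivProd
    (p := fun x : ZMod a => RegRes x) (q := fun x : ZMod b => RegRes x))
  rw [Nreg, Nat.card_congr e2, Nat.card_prod]
  rfl

lemma totient_succ_le_Nreg {q : ℕ} (hq : 1 < q) : Nat.totient q + 1 ≤ Nreg q := by
  haveI : NeZero q := ⟨by omega⟩
  haveI : Fact (1 < q) := ⟨hq⟩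
  classical
  rw [Nreg, Nat.card_eq_fintype_card, Fintype.card_subtype]
  have h0 : (0 : ZMod q) ∈ Finset.univ.filter (fun a : ZMod q => RegRes a) := by
    exact Finset.mem_filter.mpr ⟨Finset.mem_univ _, 0, by simp⟩
  have hsub : insert (0 : ZMod q) (Finset.univ.filter (fun a : ZMod q => IsUnit a)) ⊆
      Finset.univ.filter (fun a : ZMod q => RegRes a) := by
    intro a ha
    rcases Finset.mem_insert.mp ha with rfl | ha
    · exact h0
    · simp only [Finset.mem_filter, Finset.mem_univ, true_and] at ha ⊢
      obtain ⟨u, rfl⟩ := ha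
      exact ⟨(↑u⁻¹ : ZMod q), by
        rw [sq, mul_assoc, ← Units.val_mul, mul_inv_cancel, Units.val_one, mul_one]⟩
  have hcard : Nat.totient q ≤ (Finset.univ.filter (fun a : ZMod q => IsUnit a)).card := by
    rw [← ZMod.card_units_eq_totient q]
    rw [← Finset.card_univ]
    refine Finset.card_le_card_of_injOn (fun u : (ZMod q)ˣ => (u : ZMod q)) ?_ ?_
    · intro u _; simp
    · intro u _ v _ huv
      exact Units.ext huv
  calc Nat.totient q + 1
      ≤ (Finset.univ.filter (fun a : ZMod q => IsUnit a)).card + 1 := by omega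
    _ = (insert (0 : ZMod q) (Finset.univ.filter (fun a : ZMod q => IsUnit a))).card := by
        rw [Finset.card_insert_of_notMem]
        simp [not_isUnit_zero]
    _ ≤ _ := Finset.card_le_card hsub

lemma le_Nreg_sq : ∀ n : ℕ, n ≤ Nreg n ^ 2 := by
  refine Nat.recOnPosPrimePosCoprime ?_ ?_ ?_ ?_
  · intro p e hp he
    have h1 : 1 < p ^ e := Nat.one_lt_pow he.ne' hp.one_lt
    have hle : Nat.totient (p ^ e) + 1 ≤ Nreg (p ^ e) := totient_succ_le_Nreg h1
    obtain ⟨k, rfl⟩ : ∃ k, e = k + 1 := ⟨e - 1, by omega⟩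
    rw [Nat.totient_prime_pow hp (by omega)] at hle
    have hp2 : 2 ≤ p := hp.two_le
    have ht : 1 ≤ p ^ k := Nat.one_le_pow _ _ (by omega)
    rw [Nat.add_sub_cancel] at hle
    have key : p ^ (k + 1) ≤ (p ^ k * (p - 1) + 1) ^ 2 := by
      obtain ⟨s, rfl⟩ : ∃ s, p = s + 2 := ⟨p - 2, by omega⟩
      have h2 : s + 2 - 1 = s + 1 := rfl
      rw [h2, pow_succ]
      have hx1 : 1 ≤ (s + 2) ^ k * (s + 1) := Nat.one_le_iff_ne_zero.mpr (by positivity)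
      calc (s + 2) ^ k * (s + 2) ≤ (s + 2) ^ k * (2 * (s + 1)) :=
            Nat.mul_le_mul_left _ (by omega)
        _ = 2 * ((s + 2) ^ k * (s + 1)) := by ring
        _ ≤ ((s + 2) ^ k * (s + 1) + 1) ^ 2 := by nlinarith [hx1]
    exact key.trans (Nat.pow_le_pow_left hle 2)
  · exact Nat.zero_le _
  · have h1 : 0 < Nreg 1 := by
      rw [Nreg]
      haveI : Nonempty {a : ZMod 1 // RegRes a} := ⟨⟨0, 0, by simp⟩⟩
      exact Nat.card_pos
    nlinarith
  · intro a b ha hb hab iha ihb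
    rw [Nreg_mul hab, mul_pow]
    exact Nat.mul_le_mul iha ihb

lemma isRegularMod_iff (n : ℕ) (a : ℤ) :
    IsRegularMod (n : ℤ) a ↔ RegRes ((a : ZMod n)) := by
  constructor
  · rintro ⟨x, hx⟩
    refine ⟨(x : ZMod n), ?_⟩
    have := (ZMod.intCast_eq_intCast_iff _ _ _).mpr hx
    push_cast at this
    exact this
  · rintro ⟨y, hy⟩
    obtain ⟨z, rfl⟩ := ZMod.intCast_surjective y
    refine ⟨z, (ZMod.intCast_eq_intCast_iff _ _ _).mp ?_⟩
    push_cast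
    exact hy

lemma rho_eq_Nreg {n : ℕ} (hn : 1 ≤ n) : rho n = Nreg n := by
  haveI : NeZero n := ⟨by omega⟩
  classical
  rw [rho, Nreg, Nat.card_eq_fintype_card, Fintype.card_subtype]
  refine Finset.card_bij (fun (a : ℕ) _ => ((a : ZMod n))) ?_ ?_ ?_
  · intro a ha
    simp only [Finset.mem_filter, Finset.mem_Icc] at ha ⊢
    refine ⟨Finset.mem_univ _, ?_⟩
    have := (isRegularMod_iff n a).mp ha.2
    simpa using this
  · intro a ha b hb hab
    simp only [Finset.mem_filter, Finset.mem_Icc] at ha hb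
    have := (ZMod.natCast_eq_natCast_iff _ _ _).mp hab
    have ha' := ha.1; have hb' := hb.1
    have h1 : a % n = b % n := this
    rcases eq_or_lt_of_le ha'.2 with rfl | han
    · rcases eq_or_lt_of_le hb'.2 with rfl | hbn
      · rfl
      · rw [Nat.mod_self, Nat.mod_eq_of_lt hbn] at h1; omega
    · rcases eq_or_lt_of_le hb'.2 with rfl | hbn
      · rw [Nat.mod_self, Nat.mod_eq_of_lt han] at h1; omega
      · rw [Nat.mod_eq_of_lt han, Nat.mod_eq_of_lt hbn] at h1; exact h1
  · intro y hy
    simp only [Finset.mem_filter, Finset.mem_univ, true_and] at hy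
    by_cases h0 : y = 0
    · refine ⟨n, ?_, ?_⟩
      · simp only [Finset.mem_filter, Finset.mem_Icc]
        refine ⟨⟨hn, le_refl n⟩, ?_⟩
        rw [isRegularMod_iff]
        simpa [h0] using hy
      · simp [h0]
    · refine ⟨y.val, ?_, ?_⟩
      · simp only [Finset.mem_filter, Finset.mem_Icc]
        have hv : (y.val : ZMod n) = y := ZMod.natCast_rightInverse y
        refine ⟨⟨?_, ?_⟩, ?_⟩
        · have : y.val ≠ 0 := fun h => h0 (by rwa [ZMod.val_eq_zero] at h)
          omega
        · exact le_of_lt (ZMod.val_lt y)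
        · rw [isRegularMod_iff]
          simpa [hv] using hy
      · exact ZMod.natCast_rightInverse y

theorem sqrt_le_rho_le_self (n : ℕ) (hn : 1 ≤ n) :
    Real.sqrt n ≤ rho n ∧ rho n ≤ n := by
  classical
  constructor
  · have h := le_Nreg_sq n
    rw [← rho_eq_Nreg hn] at h
    have : (n : ℝ) ≤ (rho n : ℝ) ^ 2 := by exact_mod_cast h
    calc Real.sqrt n ≤ Real.sqrt ((rho n : ℝ) ^ 2) := Real.sqrt_le_sqrt this
      _ = rho n := Real.sqrt_sq (by positivity)
  · calc rho n ≤ (Finset.Icc 1 n).card := Finset.card_filter_le _ _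
      _ = n := by rw [Nat.card_Icc]; omega
end

section
/- For every integer n ≥ 1, ϱ(n) is even if and only if n ≡ 2 (mod 4). -/
lemma even_card_iff_fixed (s : Finset ℕ) (g : ℕ → ℕ)
    (hmem : ∀ a ∈ s, g a ∈ s) (hinv : ∀ a ∈ s, g (g a) = a) :
    (Even s.card ↔ Even ((s.filter fun a => g a = a).card)) := by
  classical
  have hsplit : (s.filter fun a => g a = a).card + (s.filter fun a => ¬ g a = a).card = s.card :=
    Finset.card_filter_add_card_filter_not _
  have heven : Even ((s.filter fun a => ¬ g a = a).card) := by
    set t := s.filter fun a => ¬ g a = a with ht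
    have htmem : ∀ a ∈ t, a ∈ s ∧ ¬ g a = a := by
      intro a ha; simpa [ht, Finset.mem_filter] using ha
    have h0 : ∑ _x ∈ t, (1 : ZMod 2) = 0 := by
      refine Finset.sum_involution (fun a _ => g a) (fun a ha => ?_) (fun a ha _ => ?_)
        (fun a ha => ?_) (fun a ha => ?_)
      · decide
      · exact (htmem a ha).2
      · obtain ⟨has, hne⟩ := htmem a ha
        simp only [ht, Finset.mem_filter]
        refine ⟨hmem a has, ?_⟩
        rw [hinv a has]
        exact fun h => hne h.symm
      · exact hinv a (htmem a ha).1
    have hc : ((t.card : ZMod 2)) = 0 := by simpa using h0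
    exact even_iff_two_dvd.mpr ((ZMod.natCast_eq_zero_iff _ _).mp hc)
  rw [← hsplit, Nat.even_add]
  simp [heven]

theorem rho_even_iff (n : ℕ) (hn : 1 ≤ n) : Even (rho n) ↔ n % 4 = 2 := by
  classical
  -- the involution
  set g : ℕ → ℕ := fun a => if a = n then n else n - a with hg
  set S : Finset ℕ := (Finset.Icc 1 n).filter fun a : ℕ => IsRegularMod (n : ℤ) (a : ℤ) with hS
  have hrho : rho n = S.card := by
    rw [rho, hS]
  -- n is regular
  have hnreg : IsRegularMod (n : ℤ) (n : ℤ) :=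
    ⟨0, (Int.modEq_iff_dvd).mpr ⟨1, by ring⟩⟩
  have hnS : n ∈ S := by
    simp only [hS, Finset.mem_filter, Finset.mem_Icc]
    exact ⟨⟨hn, le_refl n⟩, hnreg⟩
  -- g maps S to S
  have hmem : ∀ a ∈ S, g a ∈ S := by
    intro a ha
    simp only [hS, Finset.mem_filter, Finset.mem_Icc] at ha
    obtain ⟨⟨h1, h2⟩, x, hreg⟩ := ha
    by_cases han : a = n
    · simp [hg, han, hnS]
    · have halt : a < n := lt_of_le_of_ne h2 han
      simp only [hg, if_neg han, hS, Finset.mem_filter, Finset.mem_Icc]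
      refine ⟨⟨by omega, by omega⟩, ?_⟩
      have hcast : ((n - a : ℕ) : ℤ) = (n : ℤ) - (a : ℤ) := by
        push_cast [Nat.cast_sub h2]; ring
      obtain ⟨k, hk⟩ := (Int.modEq_iff_dvd).mp hreg
      refine ⟨-x, (Int.modEq_iff_dvd).mpr ⟨1 - 2*(a:ℤ)*x + (n:ℤ)*x - k, ?_⟩⟩
      rw [hcast]
      linear_combination -hk
  -- g is an involution on S
  have hinv : ∀ a ∈ S, g (g a) = a := by
    intro a ha
    simp only [hS, Finset.mem_filter, Finset.mem_Icc] at ha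
    obtain ⟨⟨h1, h2⟩, _⟩ := ha
    by_cases han : a = n
    · simp [hg, han]
    · simp only [hg, if_neg han]
      have : ¬ (n - a = n) := by omega
      rw [if_neg this]
      omega
  have key := even_card_iff_fixed S g hmem hinv
  set F : Finset ℕ := S.filter fun a => g a = a with hF
  have hnF : n ∈ F := by
    simp only [hF, Finset.mem_filter]
    exact ⟨hnS, by simp [hg]⟩
  rw [hrho, key]
  constructor
  · -- Even F.card → n % 4 = 2
    intro hEv
    have hpos : 0 < F.card := Finset.card_pos.mpr ⟨n, hnF⟩
    have h2le : 1 < F.card := by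
      rcases hEv with ⟨r, hr⟩; omega
    obtain ⟨a, haF, hane⟩ := Finset.exists_mem_ne h2le n
    simp only [hF, Finset.mem_filter, hS, Finset.mem_Icc] at haF
    obtain ⟨⟨⟨h1, h2⟩, hreg⟩, hfix⟩ := haF
    rw [hg] at hfix
    simp only [if_neg hane] at hfix
    have hn2a : n = 2 * a := by omega
    -- a regular mod 2a forces a odd
    obtain ⟨x, hx⟩ := hreg
    obtain ⟨k, hk⟩ := (Int.modEq_iff_dvd).mp hx
    have hcastn : (n : ℤ) = 2 * (a : ℤ) := by exact_mod_cast congrArg (Nat.cast : ℕ → ℤ) hn2a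
    have ha0 : (a : ℤ) ≠ 0 := by exact_mod_cast (by omega : a ≠ 0)
    have hcancel : 1 - (a : ℤ) * x = 2 * k := by
      have h' : (a : ℤ) * (1 - (a:ℤ) * x) = (a : ℤ) * (2 * k) := by
        rw [hcastn] at hk; linear_combination hk
      exact mul_left_cancel₀ ha0 h'
    have hodd : Odd ((a : ℤ) * x) := ⟨-k, by linarith⟩
    have hoddA : Odd (a : ℤ) := (Int.odd_mul.mp hodd).1
    have hodda : Odd a := by exact_mod_cast hoddA
    obtain ⟨j, hj⟩ := hodda
    omega
  · -- n % 4 = 2 → Even F.card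
    intro h4
    set m := n / 2 with hm
    have hn2m : n = 2 * m := by omega
    have hmodd : m % 2 = 1 := by omega
    obtain ⟨j, hj⟩ : ∃ j, m = 2 * j + 1 := ⟨m / 2, by omega⟩
    have hmreg : IsRegularMod (n : ℤ) (m : ℤ) := by
      refine ⟨1, (Int.modEq_iff_dvd).mpr ⟨-(j:ℤ), ?_⟩⟩
      have h1 : (n : ℤ) = 2 * (m : ℤ) := by exact_mod_cast congrArg (Nat.cast : ℕ → ℤ) hn2m
      have h2 : (m : ℤ) = 2 * (j : ℤ) + 1 := by exact_mod_cast congrArg (Nat.cast : ℕ → ℤ) hj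
      rw [h1, h2]; ring
    have hmF : m ∈ F := by
      simp only [hF, Finset.mem_filter, hS, Finset.mem_Icc]
      refine ⟨⟨⟨by omega, by omega⟩, hmreg⟩, ?_⟩
      have hmn : ¬ (m = n) := by omega
      simp only [hg, if_neg hmn]; omega
    have hFeq : F = {m, n} := by
      ext a
      simp only [hF, Finset.mem_filter, hS, Finset.mem_Icc, Finset.mem_insert,
        Finset.mem_singleton]
      constructor
      · rintro ⟨⟨⟨h1, h2⟩, _⟩, hfix⟩
        by_cases han : a = n
        · right; exact han
        · left
          rw [hg] at hfix; simp only [if_neg han] at hfix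
          omega
      · rintro (rfl | rfl)
        · simpa only [hF, Finset.mem_filter, hS, Finset.mem_Icc] using hmF
        · simpa only [hF, Finset.mem_filter, hS, Finset.mem_Icc] using hnF
    rw [hFeq]
    have hmn : m ≠ n := by omega
    rw [Finset.card_insert_of_notMem (by simp [hmn]), Finset.card_singleton]
    exact even_two
end
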